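/- (Inclination lemma, one step, graph form.) Let κ(u,s) = (Au + α(u,s), ᵀA^{-1}s + β(u,s)) be a map on a product of ε-balls in ℝ^{n-1}×ℝ^{n-1}, where A is invertible with ‖A^{-1}‖ ≤ ν < 1, ‖ᵀA^{-1}‖ ≤ ν, α(0,0) = β(0,0) = 0, and ‖α‖_{C¹}, ‖β‖_{C¹} ≤ Cε^γ. Fix γ₁ > 0. If ε is small enough (depending on ν, C, γ, γ₁), then for any C¹ function f with ‖df‖ ≤ γ₁ on the ε-ball, the image κ({(u, f(u))}) is again a graph {(u', f'(u'))} over the ε-ball with ‖df'‖ ≤ ν₂γ₁ where ν₂ = ν + Cε^γ < 1; moreover the induced map u ↦ u' = Au + α(u,f(u)) is a diffeomorphism onto its image whose inverse has differential norm at most ν₁ = ν + C'ε^γ(1+γ₁) < 1. -/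

import Mathlib

open Metric

section Aux

variable {E : Type*} [NormedAddCommGroup E] [NormedSpace ℝ E]

private lemma aux_lip {α : E × E → E} {f : E → E} {d γ₁ ε : ℝ}
    (hα : ContDiff ℝ 1 α) (hf : ContDiff ℝ 1 f)
    (hαb : ∀ z, ‖fderiv ℝ α z‖ ≤ d)
    (hfd : ∀ u ∈ closedBall (0 : E) ε, ‖fderiv ℝ f u‖ ≤ γ₁)
    {u v : E} (hu : u ∈ closedBall (0 : E) ε) (hv : v ∈ closedBall (0 : E) ε) :
    ‖α (u, f u) - α (v, f v)‖ ≤ d * max 1 γ₁ * ‖u - v‖ := by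
  have h0d : 0 ≤ d := le_trans (norm_nonneg _) (hαb (0, 0))
  have hφ : ∀ x ∈ closedBall (0 : E) ε, HasFDerivWithinAt (fun u => α (u, f u))
      ((fderiv ℝ α (x, f x)).comp ((ContinuousLinearMap.id ℝ E).prod (fderiv ℝ f x)))
      (closedBall (0 : E) ε) x := fun x _ =>
    (((hα.differentiable one_ne_zero) (x, f x)).hasFDerivAt.comp x
      (HasFDerivAt.prodMk (hasFDerivAt_id x) ((hf.differentiable one_ne_zero) x).hasFDerivAt)).hasFDerivWithinAt
  have hbound : ∀ x ∈ closedBall (0 : E) ε,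
      ‖(fderiv ℝ α (x, f x)).comp ((ContinuousLinearMap.id ℝ E).prod (fderiv ℝ f x))‖
        ≤ d * max 1 γ₁ := by
    intro x hx
    refine (ContinuousLinearMap.opNorm_comp_le _ _).trans ?_
    have h1 : ‖(ContinuousLinearMap.id ℝ E).prod (fderiv ℝ f x)‖ ≤ max 1 γ₁ := by
      rw [ContinuousLinearMap.opNorm_prod, Prod.norm_def]
      exact max_le_max ContinuousLinearMap.norm_id_le (hfd x hx)
    exact mul_le_mul (hαb _) h1 (norm_nonneg _) h0d
  exact (convex_closedBall (0 : E) ε).norm_image_sub_le_of_norm_hasFDerivWithin_le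
    hφ hbound hv hu

private lemma aux_norm {α : E × E → E} {d : ℝ}
    (hα : ContDiff ℝ 1 α) (hα0 : α (0, 0) = 0)
    (hαb : ∀ z, ‖fderiv ℝ α z‖ ≤ d) (z : E × E) :
    ‖α z‖ ≤ d * ‖z‖ := by
  have h := convex_univ.norm_image_sub_le_of_norm_fderiv_le
    (fun x _ => (hα.differentiable one_ne_zero) x) (fun x _ => hαb x)
    (Set.mem_univ ((0, 0) : E × E)) (Set.mem_univ z)
  have h00 : ((0, 0) : E × E) = 0 := rfl
  rw [hα0, sub_zero, h00, sub_zero] at h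
  exact h

set_option maxHeartbeats 2000000 in
private theorem aux_main [CompleteSpace E]
    (ν d γ₁ ε : ℝ)
    (hν : 0 < ν) (hν1 : ν < 1) (hγ1 : 0 < γ₁) (hε : 0 < ε) (hd : 0 < d)
    (hq₀half : d * (1 + γ₁) < 1 / 2)
    (hq₀4 : 4 * (d * (1 + γ₁)) < 1 - ν)
    (h4 : d * (1 + γ₁) * (2 * ν * γ₁ + ν + 1) < ν * γ₁ * (1 - ν))
    (hν₂ : ν + d < 1)
    (A B Ainv : E →L[ℝ] E) (α β : E × E → E) (f : E → E)
    (hAinvA : ∀ u, Ainv (A u) = u) (hAAinv : ∀ u, A (Ainv u) = u)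
    (hAinv : ‖Ainv‖ ≤ ν) (hB : ‖B‖ ≤ ν)
    (hα : ContDiff ℝ 1 α) (hβ : ContDiff ℝ 1 β)
    (hα0 : α (0, 0) = 0) (hβ0 : β (0, 0) = 0)
    (hαb : ∀ z, ‖α z‖ ≤ d ∧ ‖fderiv ℝ α z‖ ≤ d)
    (hβb : ∀ z, ‖β z‖ ≤ d ∧ ‖fderiv ℝ β z‖ ≤ d)
    (hf : ContDiff ℝ 1 f) (hf0 : f 0 = 0)
    (hfd : ∀ u ∈ closedBall (0 : E) ε, ‖fderiv ℝ f u‖ ≤ γ₁)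
    (hfb : ∀ u ∈ ball (0 : E) ε, f u ∈ ball (0 : E) ε) :
    Set.InjOn (fun u => A u + α (u, f u)) (ball (0 : E) ε) ∧
    ∃ g f' : E → E, ∀ u' ∈ ball (0 : E) ε,
      g u' ∈ ball (0 : E) ε ∧
      A (g u') + α (g u', f (g u')) = u' ∧
      DifferentiableAt ℝ g u' ∧
      ‖fderiv ℝ g u'‖ ≤ ν + 2 * d * (1 + γ₁) ∧
      f' u' = B (f (g u')) + β (g u', f (g u')) ∧
      DifferentiableAt ℝ f' u' ∧
      ‖fderiv ℝ f' u'‖ ≤ (ν + d) * γ₁ := by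
  classical
  set q₀ : ℝ := d * (1 + γ₁) with hq₀_def
  have h1γ : (0 : ℝ) < 1 + γ₁ := by linarith
  have hq₀ : 0 < q₀ := by positivity
  set ℓ : ℝ := ν * q₀ with hℓ_def
  have hℓpos : 0 < ℓ := by positivity
  have hℓhalf : ℓ < 1 / 2 := by
    rw [hℓ_def]
    nlinarith [mul_le_mul_of_nonneg_right hν1.le hq₀.le]
  have hsub : 0 < 1 - ℓ := by linarith
  set L : ℝ := ν / (1 - ℓ) with hL_def
  have hLpos : 0 < L := by positivity
  set ν₁ : ℝ := ν + 2 * d * (1 + γ₁) with hν₁_def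
  have hν₁q : ν₁ = ν + 2 * q₀ := by rw [hν₁_def, hq₀_def]; ring
  have hν₁pos : 0 < ν₁ := by positivity
  have hν₁lt1 : ν₁ < 1 := by rw [hν₁q]; linarith
  have hνq : ν * q₀ < 1 / 2 := by rw [← hℓ_def]; exact hℓhalf
  have hLν₁ : L ≤ ν₁ := by
    rw [hL_def, div_le_iff₀ hsub, hν₁q, hℓ_def]
    have hν2le : ν * ν ≤ 1 := by nlinarith [hν.le, hν1]
    have e1 : ν * ν * q₀ ≤ 1 * q₀ := mul_le_mul_of_nonneg_right hν2le hq₀.le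
    have e2 : 2 * (ν * q₀) * q₀ ≤ 1 * q₀ :=
      mul_le_mul_of_nonneg_right (by linarith) hq₀.le
    nlinarith [e1, e2]
  have hmax : d * max 1 γ₁ ≤ q₀ := by
    rw [hq₀_def]
    have h1 : max 1 γ₁ ≤ 1 + γ₁ := max_le (by linarith) (by linarith)
    nlinarith
  -- Lipschitz estimates for the nonlinear parts along the graph of f
  have hαlip : ∀ u ∈ closedBall (0 : E) ε, ∀ v ∈ closedBall (0 : E) ε,
      ‖α (u, f u) - α (v, f v)‖ ≤ q₀ * ‖u - v‖ := by
    intro u hu v hv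
    exact (aux_lip hα hf (fun z => (hαb z).2) hfd hu hv).trans
      (mul_le_mul_of_nonneg_right hmax (norm_nonneg _))
  have hβlip : ∀ u ∈ closedBall (0 : E) ε, ∀ v ∈ closedBall (0 : E) ε,
      ‖β (u, f u) - β (v, f v)‖ ≤ q₀ * ‖u - v‖ := by
    intro u hu v hv
    exact (aux_lip hβ hf (fun z => (hβb z).2) hfd hu hv).trans
      (mul_le_mul_of_nonneg_right hmax (norm_nonneg _))
  -- f maps the closed ball into the closed ball
  have hfball : ∀ u ∈ closedBall (0 : E) ε, ‖f u‖ ≤ ε := by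
    intro u hu
    have hcl : closedBall (0 : E) ε ⊆ {x | ‖f x‖ ≤ ε} := by
      rw [← closure_ball (0 : E) hε.ne']
      refine closure_minimal ?_ (isClosed_le ((hf.continuous).norm) continuous_const)
      intro x hx
      exact (mem_ball_zero_iff.1 (hfb x hx)).le
    exact hcl hu
  -- smallness of α along the graph
  have hαsmall : ∀ u ∈ closedBall (0 : E) ε, ‖α (u, f u)‖ ≤ d * ε := by
    intro u hu
    have h1 := aux_norm hα hα0 (fun z => (hαb z).2) (u, f u)
    have h2 : ‖((u, f u) : E × E)‖ ≤ ε := by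
      rw [Prod.norm_def]
      exact max_le (mem_closedBall_zero_iff.1 hu) (hfball u hu)
    exact h1.trans (mul_le_mul_of_nonneg_left h2 hd.le)
  -- injectivity
  have hinj : Set.InjOn (fun u => A u + α (u, f u)) (ball (0 : E) ε) := by
    intro u hu v hv he
    simp only at he
    have h2 : A u - A v = α (v, f v) - α (u, f u) := by
      rw [sub_eq_sub_iff_add_eq_add, he, add_comm]
    have h3 : u - v = Ainv (α (v, f v) - α (u, f u)) := by
      calc u - v = Ainv (A (u - v)) := (hAinvA _).symm
        _ = Ainv (A u - A v) := by rw [map_sub]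
        _ = Ainv (α (v, f v) - α (u, f u)) := by rw [h2]
    have h5 : ‖u - v‖ ≤ ℓ * ‖u - v‖ := by
      calc ‖u - v‖ = ‖Ainv (α (v, f v) - α (u, f u))‖ := by rw [← h3]
        _ ≤ ‖Ainv‖ * ‖α (v, f v) - α (u, f u)‖ := Ainv.le_opNorm _
        _ ≤ ν * (q₀ * ‖v - u‖) := by
            refine mul_le_mul hAinv ?_ (norm_nonneg _) hν.le
            exact hαlip v (ball_subset_closedBall hv) u (ball_subset_closedBall hu)
        _ = ℓ * ‖u - v‖ := by rw [norm_sub_rev]; ring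
    have h6 : ‖u - v‖ ≤ 0 := by
      by_contra hcon
      push_neg at hcon
      have h7 : ℓ * ‖u - v‖ < 1 * ‖u - v‖ :=
        mul_lt_mul_of_pos_right (by linarith) hcon
      linarith
    exact sub_eq_zero.1 (norm_eq_zero.1 (le_antisymm h6 (norm_nonneg _)))
  refine ⟨hinj, ?_⟩
  -- surjectivity onto the ball, via the Banach fixed point theorem
  have hsurj : ∀ w ∈ ball (0 : E) ε, ∃ u, u ∈ ball (0 : E) ε ∧ A u + α (u, f u) = w := by
    intro w hw
    have hwε : ‖w‖ < ε := mem_ball_zero_iff.1 hw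
    have hTnorm : ∀ x ∈ closedBall (0 : E) ε,
        ‖Ainv (w - α (x, f x))‖ ≤ ν * (‖w‖ + d * ε) := by
      intro x hx
      refine (Ainv.le_opNorm _).trans ?_
      have h1 : ‖w - α (x, f x)‖ ≤ ‖w‖ + d * ε := by
        refine (norm_sub_le _ _).trans ?_
        linarith [hαsmall x hx]
      exact mul_le_mul hAinv h1 (norm_nonneg _) hν.le
    haveI : Nonempty (closedBall (0 : E) ε) := ⟨⟨0, mem_closedBall_self hε.le⟩⟩
    haveI : CompleteSpace (closedBall (0 : E) ε) :=
      (isClosed_closedBall (x := (0 : E)) (ε := ε)).completeSpace_coe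
    have hmap : ∀ u : closedBall (0 : E) ε,
        Ainv (w - α (u.1, f u.1)) ∈ closedBall (0 : E) ε := by
      intro u
      rw [mem_closedBall_zero_iff]
      refine (hTnorm u.1 u.2).trans ?_
      have m1 : ν * ‖w‖ ≤ ν * ε := mul_le_mul_of_nonneg_left hwε.le hν.le
      have m2 : ν * (d * ε) ≤ d * ε := mul_le_of_le_one_left (by positivity) hν1.le
      have m3 : (ν + d) * ε ≤ 1 * ε := mul_le_mul_of_nonneg_right hν₂.le hε.le
      nlinarith [m1, m2, m3]
    let T : closedBall (0 : E) ε → closedBall (0 : E) ε :=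
      fun u => ⟨Ainv (w - α (u.1, f u.1)), hmap u⟩
    have hcontr : ContractingWith ⟨ℓ, hℓpos.le⟩ T := by
      constructor
      · change ℓ < 1
        push_cast
        linarith
      · refine LipschitzWith.of_dist_le_mul fun u v => ?_
        simp only [Subtype.dist_eq, dist_eq_norm]
        show ‖Ainv (w - α (u.1, f u.1)) - Ainv (w - α (v.1, f v.1))‖ ≤ _
        have h1 : Ainv (w - α (u.1, f u.1)) - Ainv (w - α (v.1, f v.1))
            = Ainv (α (v.1, f v.1) - α (u.1, f u.1)) := by
          rw [← map_sub]
          congr 1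
          abel
        rw [h1]
        calc ‖Ainv (α (v.1, f v.1) - α (u.1, f u.1))‖
            ≤ ‖Ainv‖ * ‖α (v.1, f v.1) - α (u.1, f u.1)‖ := Ainv.le_opNorm _
          _ ≤ ν * (q₀ * ‖v.1 - u.1‖) :=
              mul_le_mul hAinv (hαlip v.1 v.2 u.1 u.2) (norm_nonneg _) hν.le
          _ = ℓ * ‖u.1 - v.1‖ := by rw [norm_sub_rev]; ring
    let u := ContractingWith.fixedPoint T hcontr
    have hfix : T u = u := hcontr.fixedPoint_isFixedPt
    have hval : Ainv (w - α (u.1, f u.1)) = u.1 := congrArg Subtype.val hfix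
    refine ⟨u.1, ?_, ?_⟩
    · rw [mem_ball_zero_iff, ← hval]
      refine (hTnorm u.1 u.2).trans_lt ?_
      have m1 : ν * ‖w‖ < ν * ε := mul_lt_mul_of_pos_left hwε hν
      have m2 : ν * (d * ε) ≤ d * ε := mul_le_of_le_one_left (by positivity) hν1.le
      have m3 : (ν + d) * ε ≤ 1 * ε := mul_le_mul_of_nonneg_right hν₂.le hε.le
      nlinarith [m1, m2, m3]
    · have h7 := congrArg A hval
      rw [hAAinv] at h7
      rw [← h7]
      abel
  -- define g
  choose g0 hg1 hg2 using hsurj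
  set g : E → E := fun w => if h : w ∈ ball (0 : E) ε then g0 w h else 0 with hg_def
  have hg : ∀ w (hw : w ∈ ball (0 : E) ε),
      g w ∈ ball (0 : E) ε ∧ A (g w) + α (g w, f (g w)) = w := by
    intro w hw
    simp only [hg_def, dif_pos hw]
    exact ⟨hg1 w hw, hg2 w hw⟩
  -- Lipschitz estimate for g
  have hglip : ∀ w ∈ ball (0 : E) ε, ∀ w' ∈ ball (0 : E) ε,
      ‖g w - g w'‖ ≤ L * ‖w - w'‖ := by
    intro w hw w' hw'
    obtain ⟨huin, hueq⟩ := hg w hw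
    obtain ⟨hvin, hveq⟩ := hg w' hw'
    set u := g w
    set v := g w'
    have hAu : A u = w - α (u, f u) := eq_sub_of_add_eq hueq
    have hAv : A v = w' - α (v, f v) := eq_sub_of_add_eq hveq
    have h3 : u - v = Ainv ((w - w') - (α (u, f u) - α (v, f v))) := by
      calc u - v = Ainv (A (u - v)) := (hAinvA _).symm
        _ = Ainv (A u - A v) := by rw [map_sub]
        _ = Ainv ((w - w') - (α (u, f u) - α (v, f v))) := by
            rw [hAu, hAv]; congr 1; abel
    have h5 : ‖u - v‖ ≤ ν * ‖w - w'‖ + ℓ * ‖u - v‖ := by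
      calc ‖u - v‖ = ‖Ainv ((w - w') - (α (u, f u) - α (v, f v)))‖ := by rw [← h3]
        _ ≤ ‖Ainv‖ * ‖(w - w') - (α (u, f u) - α (v, f v))‖ := Ainv.le_opNorm _
        _ ≤ ν * (‖w - w'‖ + ‖α (u, f u) - α (v, f v)‖) := by
            refine mul_le_mul hAinv ((norm_sub_le _ _)) (norm_nonneg _) hν.le
        _ ≤ ν * (‖w - w'‖ + q₀ * ‖u - v‖) := by
            have h8 := hαlip u (ball_subset_closedBall huin) v (ball_subset_closedBall hvin)
            exact mul_le_mul_of_nonneg_left (by linarith) hν.le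
        _ = ν * ‖w - w'‖ + ℓ * ‖u - v‖ := by rw [hℓ_def]; ring
    rw [hL_def, div_mul_eq_mul_div, le_div_iff₀ hsub]
    nlinarith [h5]
  have hgLip : LipschitzOnWith ⟨ν₁, hν₁pos.le⟩ g (ball (0 : E) ε) := by
    refine LipschitzOnWith.of_dist_le_mul ?_
    intro x hx y hy
    rw [dist_eq_norm, dist_eq_norm]
    refine (hglip x hx y hy).trans ?_
    exact mul_le_mul_of_nonneg_right hLν₁ (norm_nonneg _)
  -- the slope bound constant for f'
  have hM : (ν * γ₁ + q₀) * L ≤ (ν + d) * γ₁ := by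
    have hLb : L ≤ ν + 2 * q₀ := hLν₁.trans_eq hν₁q
    have hpos : (0 : ℝ) ≤ ν * γ₁ + q₀ := by positivity
    have hstep : (ν * γ₁ + q₀) * L ≤ (ν * γ₁ + q₀) * (ν + 2 * q₀) :=
      mul_le_mul_of_nonneg_left hLb hpos
    have t2 : 2 * q₀ * q₀ ≤ 1 * q₀ :=
      mul_le_mul_of_nonneg_right (by linarith) hq₀.le
    have t3 : (0:ℝ) ≤ d * γ₁ := mul_nonneg hd.le hγ1.le
    nlinarith [hstep, h4, t2, t3]
  -- define f'
  set F : E → E := fun w => B (f (g w)) + β (g w, f (g w)) with hF_def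
  have hFlip : ∀ w ∈ ball (0 : E) ε, ∀ w' ∈ ball (0 : E) ε,
      ‖F w - F w'‖ ≤ ((ν + d) * γ₁) * ‖w - w'‖ := by
    intro w hw w' hw'
    obtain ⟨huin, -⟩ := hg w hw
    obtain ⟨hvin, -⟩ := hg w' hw'
    set u := g w
    set v := g w'
    have hu' : u ∈ closedBall (0 : E) ε := ball_subset_closedBall huin
    have hv' : v ∈ closedBall (0 : E) ε := ball_subset_closedBall hvin
    have hfl : ‖f u - f v‖ ≤ γ₁ * ‖u - v‖ :=
      (convex_closedBall (0 : E) ε).norm_image_sub_le_of_norm_fderiv_le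
        (fun x _ => (hf.differentiable one_ne_zero) x) hfd hv' hu'
    have h1 : F w - F w' = B (f u - f v) + (β (u, f u) - β (v, f v)) := by
      simp only [hF_def]
      rw [map_sub]
      abel
    calc ‖F w - F w'‖ ≤ ‖B (f u - f v)‖ + ‖β (u, f u) - β (v, f v)‖ := by
          rw [h1]; exact norm_add_le _ _
      _ ≤ ν * (γ₁ * ‖u - v‖) + q₀ * ‖u - v‖ := by
          refine add_le_add ?_ (hβlip u hu' v hv')
          exact (B.le_opNorm _).trans (mul_le_mul hB hfl (norm_nonneg _) hν.le)
      _ = (ν * γ₁ + q₀) * ‖u - v‖ := by ring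
      _ ≤ (ν * γ₁ + q₀) * (L * ‖w - w'‖) := by
          refine mul_le_mul_of_nonneg_left (hglip w hw w' hw') (by positivity)
      _ = ((ν * γ₁ + q₀) * L) * ‖w - w'‖ := by ring
      _ ≤ ((ν + d) * γ₁) * ‖w - w'‖ := mul_le_mul_of_nonneg_right hM (norm_nonneg _)
  have hFLip : LipschitzOnWith ⟨(ν + d) * γ₁, by positivity⟩ F (ball (0 : E) ε) := by
    refine LipschitzOnWith.of_dist_le_mul ?_
    intro x hx y hy
    rw [dist_eq_norm, dist_eq_norm]
    exact hFlip x hx y hy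
  refine ⟨g, F, ?_⟩
  intro u' hu'
  obtain ⟨hgin, hgeq⟩ := hg u' hu'
  -- differentiability of g at u'
  set a := g u' with ha_def
  have hfa_mem : a ∈ closedBall (0 : E) ε := ball_subset_closedBall hgin
  have hNnorm : ‖(fderiv ℝ α (a, f a)).comp
      ((ContinuousLinearMap.id ℝ E).prod (fderiv ℝ f a))‖ ≤ q₀ := by
    refine (ContinuousLinearMap.opNorm_comp_le _ _).trans ?_
    have h1 : ‖(ContinuousLinearMap.id ℝ E).prod (fderiv ℝ f a)‖ ≤ max 1 γ₁ := by
      rw [ContinuousLinearMap.opNorm_prod, Prod.norm_def]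
      exact max_le_max ContinuousLinearMap.norm_id_le (hfd a hfa_mem)
    exact (mul_le_mul ((hαb _).2) h1 (norm_nonneg _) hd.le).trans hmax
  set N : E →L[ℝ] E := (fderiv ℝ α (a, f a)).comp
    ((ContinuousLinearMap.id ℝ E).prod (fderiv ℝ f a)) with hN_def
  have ht : ‖-(Ainv.comp N)‖ < 1 := by
    rw [norm_neg]
    have h9 : ‖Ainv.comp N‖ ≤ ν * q₀ :=
      (ContinuousLinearMap.opNorm_comp_le _ _).trans
        (mul_le_mul hAinv hNnorm (norm_nonneg _) hν.le)
    have h10 : ν * q₀ < 1 := by rw [← hℓ_def]; linarith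
    linarith
  set U : (E →L[ℝ] E)ˣ := Units.oneSub (-(Ainv.comp N)) ht with hU_def
  have hUval : (U : E →L[ℝ] E) = 1 + Ainv.comp N := by
    rw [hU_def, Units.val_oneSub, sub_neg_eq_add]
  let eU : E ≃L[ℝ] E := ContinuousLinearEquiv.equivOfInverse (U : E →L[ℝ] E)
    ((U⁻¹ : (E →L[ℝ] E)ˣ) : E →L[ℝ] E)
    (fun x => by rw [← ContinuousLinearMap.mul_apply, U.inv_mul,
      ContinuousLinearMap.one_apply])
    (fun x => by rw [← ContinuousLinearMap.mul_apply, U.mul_inv,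
      ContinuousLinearMap.one_apply])
  let eA : E ≃L[ℝ] E := ContinuousLinearEquiv.equivOfInverse A Ainv hAinvA hAAinv
  let eΦ : E ≃L[ℝ] E := eU.trans eA
  have heΦ : (eΦ : E →L[ℝ] E) = A + N := by
    ext x
    show eA (eU x) = A x + N x
    show A ((U : E →L[ℝ] E) x) = A x + N x
    rw [hUval]
    rw [ContinuousLinearMap.add_apply, ContinuousLinearMap.one_apply, map_add,
      ContinuousLinearMap.comp_apply, hAAinv]
  have hstrict : HasStrictFDerivAt (fun u => A u + α (u, f u)) (eΦ : E →L[ℝ] E) a := by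
    rw [heΦ]
    have hαS : HasStrictFDerivAt α (fderiv ℝ α (a, f a)) (a, f a) :=
      (hα.contDiffAt).hasStrictFDerivAt one_ne_zero
    have hfS : HasStrictFDerivAt f (fderiv ℝ f a) a :=
      (hf.contDiffAt).hasStrictFDerivAt one_ne_zero
    have hcomp : HasStrictFDerivAt (fun u => α (u, f u)) N a :=
      hαS.comp a (HasStrictFDerivAt.prodMk (hasStrictFDerivAt_id a) hfS)
    exact (A.hasStrictFDerivAt).add hcomp
  have hΦa : (fun u => A u + α (u, f u)) a = u' := hgeq
  have hΦa2 : A a + α (a, f a) = u' := hgeq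
  set h : E → E := hstrict.localInverse (fun u => A u + α (u, f u)) eΦ a with hh_def
  have hhu' : h u' = a := by
    rw [hh_def, ← hΦa]
    exact hstrict.localInverse_apply_image
  have hd1 : ∀ᶠ w in nhds u', (fun u => A u + α (u, f u)) (h w) = w := by
    have := hstrict.eventually_right_inverse
    simp only [hΦa2] at this
    exact this
  have hd2 : ∀ᶠ w in nhds u', h w ∈ ball (0 : E) ε := by
    have hc : ContinuousAt h u' := by
      have := hstrict.localInverse_continuousAt
      simp only [hΦa2] at this
      exact this
    exact hc.eventually_mem (isOpen_ball.mem_nhds (hhu' ▸ hgin))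
  have hd3 : ∀ᶠ w in nhds u', w ∈ ball (0 : E) ε := isOpen_ball.eventually_mem hu'
  have heqgh : g =ᶠ[nhds u'] h := by
    filter_upwards [hd1, hd2, hd3] with w h1 h2 h3
    exact hinj (hg w h3).1 h2 ((hg w h3).2.trans h1.symm)
  have hdiffh : DifferentiableAt ℝ h u' := by
    have := hstrict.to_localInverse
    simp only [hΦa2] at this
    exact this.differentiableAt
  have hdiffg : DifferentiableAt ℝ g u' := heqgh.differentiableAt_iff.2 hdiffh
  have hgbound : ‖fderiv ℝ g u'‖ ≤ ν + 2 * d * (1 + γ₁) := by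
    have := hdiffg.hasFDerivAt.le_of_lipschitzOn (isOpen_ball.mem_nhds hu') hgLip
    exact this
  -- differentiability of F at u'
  have hdF1 : DifferentiableAt ℝ (fun w => f (g w)) u' :=
    DifferentiableAt.comp u' ((hf.differentiable one_ne_zero) (g u')) hdiffg
  have hdF : DifferentiableAt ℝ F u' := by
    refine DifferentiableAt.add ?_ ?_
    · exact (B.differentiableAt).comp u' hdF1
    · exact DifferentiableAt.comp u'
        ((hβ.differentiable one_ne_zero) (g u', f (g u'))) (hdiffg.prodMk hdF1)
  have hFbound : ‖fderiv ℝ F u'‖ ≤ (ν + d) * γ₁ := by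
    have := hdF.hasFDerivAt.le_of_lipschitzOn (isOpen_ball.mem_nhds hu') hFLip
    exact this
  exact ⟨hgin, hgeq, hdiffg, hgbound, rfl, hdF, hFbound⟩

end Aux

set_option maxHeartbeats 2000000 in
/-- Inclination lemma, one step, graph form: for the hyperbolic Poincaré map
`κ(u,s) = (Au + α(u,s), ᵀA⁻¹s + β(u,s))` with `‖A⁻¹‖, ‖ᵀA⁻¹‖ ≤ ν < 1` and
`‖α‖_{C¹}, ‖β‖_{C¹} ≤ Cε^γ`, if `ε` is small then the image of the graph of any `f`
with slope `‖df‖ ≤ γ₁` is again a graph over the `ε`-ball, with slope `≤ ν₂γ₁`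
(`ν₂ = ν + Cε^γ < 1`), and the induced horizontal map is invertible with inverse
differential bounded by `ν₁ = ν + C'ε^γ(1+γ₁) < 1`. -/
theorem stmt17 {m : ℕ} (ν C γ γ₁ : ℝ)
    (hν : 0 < ν) (hν1 : ν < 1) (hC : 0 < C) (hγ : 0 < γ) (hγ1 : 0 < γ₁) :
    ∃ ε₀ : ℝ, 0 < ε₀ ∧ ∃ C' : ℝ, 0 < C' ∧
      ∀ ε : ℝ, 0 < ε → ε < ε₀ →
      ∀ (A B Ainv : EuclideanSpace ℝ (Fin m) →L[ℝ] EuclideanSpace ℝ (Fin m))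
        (α β : EuclideanSpace ℝ (Fin m) × EuclideanSpace ℝ (Fin m) →
          EuclideanSpace ℝ (Fin m))
        (f : EuclideanSpace ℝ (Fin m) → EuclideanSpace ℝ (Fin m)),
        (∀ u, Ainv (A u) = u) → (∀ u, A (Ainv u) = u) →
        ‖Ainv‖ ≤ ν → ‖B‖ ≤ ν →
        ContDiff ℝ 1 α → ContDiff ℝ 1 β →
        α (0, 0) = 0 → β (0, 0) = 0 →
        (∀ z, ‖α z‖ ≤ C * ε ^ γ ∧ ‖fderiv ℝ α z‖ ≤ C * ε ^ γ) →
        (∀ z, ‖β z‖ ≤ C * ε ^ γ ∧ ‖fderiv ℝ β z‖ ≤ C * ε ^ γ) →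
        ContDiff ℝ 1 f → f 0 = 0 →
        (∀ u ∈ closedBall (0 : EuclideanSpace ℝ (Fin m)) ε, ‖fderiv ℝ f u‖ ≤ γ₁) →
        (∀ u ∈ ball (0 : EuclideanSpace ℝ (Fin m)) ε,
          f u ∈ ball (0 : EuclideanSpace ℝ (Fin m)) ε) →
        (ν + C * ε ^ γ < 1) ∧ (ν + C' * ε ^ γ * (1 + γ₁) < 1) ∧
        Set.InjOn (fun u => A u + α (u, f u)) (ball (0 : EuclideanSpace ℝ (Fin m)) ε) ∧
        ∃ g f' : EuclideanSpace ℝ (Fin m) → EuclideanSpace ℝ (Fin m),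
          ∀ u' ∈ ball (0 : EuclideanSpace ℝ (Fin m)) ε,
            g u' ∈ ball (0 : EuclideanSpace ℝ (Fin m)) ε ∧
            A (g u') + α (g u', f (g u')) = u' ∧
            DifferentiableAt ℝ g u' ∧
            ‖fderiv ℝ g u'‖ ≤ ν + C' * ε ^ γ * (1 + γ₁) ∧
            f' u' = B (f (g u')) + β (g u', f (g u')) ∧
            DifferentiableAt ℝ f' u' ∧
            ‖fderiv ℝ f' u'‖ ≤ (ν + C * ε ^ γ) * γ₁ := by
  have h1γ : (0 : ℝ) < 1 + γ₁ := by linarith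
  have h1ν : (0 : ℝ) < 1 - ν := by linarith
  set K : ℝ := min (min ((1 - ν) / 2) (1 / (2 * (1 + γ₁))))
      (min ((1 - ν) / (8 * (1 + γ₁)))
        (ν * γ₁ * (1 - ν) / (2 * (1 + γ₁) * (2 * ν * γ₁ + ν + 1)))) with hK_def
  have hK : 0 < K := by
    refine lt_min (lt_min (by positivity) (by positivity)) (lt_min (by positivity) ?_)
    have : (0:ℝ) < 2 * ν * γ₁ + ν + 1 := by positivity
    positivity
  have hK1 : K ≤ (1 - ν) / 2 := le_trans (min_le_left _ _) (min_le_left _ _)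
  have hK2 : K ≤ 1 / (2 * (1 + γ₁)) := le_trans (min_le_left _ _) (min_le_right _ _)
  have hK3 : K ≤ (1 - ν) / (8 * (1 + γ₁)) := le_trans (min_le_right _ _) (min_le_left _ _)
  have hK4 : K ≤ ν * γ₁ * (1 - ν) / (2 * (1 + γ₁) * (2 * ν * γ₁ + ν + 1)) :=
    le_trans (min_le_right _ _) (min_le_right _ _)
  refine ⟨(K / C) ^ (1 / γ), Real.rpow_pos_of_pos (by positivity) _, 2 * C, by positivity, ?_⟩
  intro ε hε hεε₀ A B Ainv α β f hAinvA hAAinv hAinv hB hα hβ hα0 hβ0 hαb hβb hf hf0 hfd hfb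
  set d : ℝ := C * ε ^ γ with hd_def
  have hεγ : (0:ℝ) < ε ^ γ := Real.rpow_pos_of_pos hε γ
  have hd : 0 < d := by positivity
  have hdK : d < K := by
    have h1 : ε ^ γ < ((K / C) ^ (1 / γ)) ^ γ := Real.rpow_lt_rpow hε.le hεε₀ hγ
    have h2 : ((K / C) ^ (1 / γ)) ^ γ = K / C := by
      rw [← Real.rpow_mul (by positivity : (0:ℝ) ≤ K / C), one_div_mul_cancel hγ.ne',
        Real.rpow_one]
    rw [h2] at h1
    have h3 : C * ε ^ γ < C * (K / C) := (mul_lt_mul_iff_right₀ hC).2 h1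
    rw [mul_div_cancel₀ _ hC.ne'] at h3
    rw [hd_def]
    exact h3
  -- numeric consequences
  have hKa : K * (2 * (1 + γ₁)) ≤ 1 := by
    rw [← le_div_iff₀ (by positivity)]
    exact hK2
  have hKb : K * (8 * (1 + γ₁)) ≤ 1 - ν := by
    rw [← le_div_iff₀ (by positivity)]
    exact hK3
  have hposA : (0:ℝ) < 2 * ν * γ₁ + ν + 1 := by positivity
  have hKc : K * (2 * (1 + γ₁) * (2 * ν * γ₁ + ν + 1)) ≤ ν * γ₁ * (1 - ν) := by
    rw [← le_div_iff₀ (by positivity)]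
    exact hK4
  have hmul1 : d * (1 + γ₁) < K * (1 + γ₁) := mul_lt_mul_of_pos_right hdK h1γ
  have hq₀half : d * (1 + γ₁) < 1 / 2 := by nlinarith [hmul1, hKa]
  have hq₀4 : 4 * (d * (1 + γ₁)) < 1 - ν := by nlinarith [hmul1, hKb]
  have hmul2 : d * ((1 + γ₁) * (2 * ν * γ₁ + ν + 1))
      < K * ((1 + γ₁) * (2 * ν * γ₁ + ν + 1)) :=
    mul_lt_mul_of_pos_right hdK (mul_pos h1γ hposA)
  have h4 : d * (1 + γ₁) * (2 * ν * γ₁ + ν + 1) < ν * γ₁ * (1 - ν) := by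
    nlinarith [hmul2, hKc, mul_pos (mul_pos hν hγ1) h1ν]
  have hν₂ : ν + d < 1 := by linarith
  obtain ⟨hinj, g, F, hprop⟩ := aux_main ν d γ₁ ε hν hν1 hγ1 hε hd hq₀half hq₀4 h4 hν₂
    A B Ainv α β f hAinvA hAAinv hAinv hB hα hβ hα0 hβ0 hαb hβb hf hf0 hfd hfb
  have hCd : 2 * C * ε ^ γ * (1 + γ₁) = 2 * d * (1 + γ₁) := by rw [hd_def]; ring
  refine ⟨hν₂, ?_, hinj, g, F, ?_⟩
  · rw [hCd]
    linarith
  · intro u' hu'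
    obtain ⟨p1, p2, p3, p4, p5, p6, p7⟩ := hprop u' hu'
    refine ⟨p1, p2, p3, ?_, p5, p6, p7⟩
    rw [hCd]
    exact p4
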